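/- In the passivity analysis with P = I, C_p = B†, and Q = -(A + A†) where A = -Δ(iΩ_-, iΩ_+) - Δ(Γ_-, Γ_+), the matrix Q equals Δ(C_-†C_- - C_+^T C_+^#, 2iΩ_+); in particular the LMI [[PA + A†P + Q, PB - C_p†],[B†P - C_p, 0]] = 0 is satisfied with equality. -/

import Mathlib

open Matrix

noncomputable def dup {r k : ℕ} (U V : Matrix (Fin r) (Fin k) ℂ) :
    Matrix (Fin r ⊕ Fin r) (Fin k ⊕ Fin k) ℂ :=
  Matrix.fromBlocks U V (V.map (starRingEnd ℂ)) (U.map (starRingEnd ℂ))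

private lemma ct_apply' {r k : ℕ} (M : Matrix (Fin r) (Fin k) ℂ) (i j) :
    Mᴴ j i = (starRingEnd ℂ) (M i j) := rfl

theorem passivity_Q {n m : ℕ}
    (Ωm Ωp : Matrix (Fin n) (Fin n) ℂ)
    (hΩm : Ωm = Ωmᴴ) (hΩp : Ωp = Ωpᵀ)
    (Cm Cp : Matrix (Fin m) (Fin n) ℂ)
    (Γm Γp : Matrix (Fin n) (Fin n) ℂ)
    (hΓm : Γm = (1/2 : ℂ) • (Cmᴴ * Cm - Cpᵀ * Cp.map (starRingEnd ℂ)))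
    (hΓp : Γp = (1/2 : ℂ) • (Cmᴴ * Cp - Cpᵀ * Cm.map (starRingEnd ℂ)))
    (A : Matrix (Fin n ⊕ Fin n) (Fin n ⊕ Fin n) ℂ)
    (hA : A = -dup (Complex.I • Ωm) (Complex.I • Ωp) - dup Γm Γp) :
    -(A + Aᴴ) = dup (Cmᴴ * Cm - Cpᵀ * Cp.map (starRingEnd ℂ))
        ((2 * Complex.I) • Ωp) := by
  set X := Cmᴴ * Cm - Cpᵀ * Cp.map (starRingEnd ℂ) with hX
  -- Γm is Hermitian
  have hΓmH : Γmᴴ = Γm := by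
    rw [hΓm, Matrix.conjTranspose_smul, Matrix.conjTranspose_sub,
      Matrix.conjTranspose_mul, Matrix.conjTranspose_mul,
      Matrix.conjTranspose_conjTranspose]
    rw [show (Cp.map (starRingEnd ℂ))ᴴ = Cpᵀ by ext i j; simp [Matrix.conjTranspose_apply],
      show Cpᵀᴴ = Cp.map (starRingEnd ℂ) by ext i j; simp [Matrix.conjTranspose_apply]]
    norm_num
    exact hX.symm
  -- Γp is antisymmetric
  have hΓpT : Γpᵀ = -Γp := by
    rw [hΓp, Matrix.transpose_smul, Matrix.transpose_sub, Matrix.transpose_mul,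
      Matrix.transpose_mul, Matrix.transpose_transpose]
    rw [show (Cmᴴ)ᵀ = Cm.map (starRingEnd ℂ) by ext i j; simp [Matrix.conjTranspose_apply],
      show (Cm.map (starRingEnd ℂ))ᵀ = Cmᴴ by ext i j; simp [Matrix.conjTranspose_apply]]
    rw [smul_sub, smul_sub, neg_sub]
  have hS : ∀ i j, (starRingEnd ℂ) (Ωm j i) = Ωm i j := fun i j => by
    conv_rhs => rw [hΩm]
    rfl
  have hP : ∀ i j, Ωp j i = Ωp i j := fun i j => by
    conv_rhs => rw [hΩp]
    rfl
  have hG : ∀ i j, (starRingEnd ℂ) (Γm j i) = Γm i j := fun i j => by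
    conv_rhs => rw [← hΓmH]
    rfl
  have hT : ∀ i j, Γp j i = -Γp i j := fun i j => by
    have := congrFun (congrFun hΓpT i) j
    simpa [Matrix.transpose_apply] using this
  have hXe : ∀ i j, Γm i j = (1/2 : ℂ) * X i j := fun i j => by
    rw [hΓm]; simp
  have hT2 : ∀ i j, (starRingEnd ℂ) (Γp j i) = -(starRingEnd ℂ) (Γp i j) := fun i j => by
    rw [hT i j, map_neg]
  have hXc : ∀ i j, (starRingEnd ℂ) (Γm i j) = (1/2 : ℂ) * (starRingEnd ℂ) (X i j) :=
    fun i j => by rw [hXe i j, _root_.map_mul]; simp [Complex.conj_ofNat]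
  subst hA
  ext i j
  rcases i with i | i <;> rcases j with j | j <;>
    simp only [dup, Matrix.neg_apply, Matrix.add_apply, Matrix.sub_apply,
      Matrix.conjTranspose_apply, Matrix.fromBlocks_apply₁₁, Matrix.fromBlocks_apply₁₂,
      Matrix.fromBlocks_apply₂₁, Matrix.fromBlocks_apply₂₂, Matrix.map_apply,
      Matrix.smul_apply, smul_eq_mul, RCLike.star_def, map_sub, map_neg, _root_.map_mul,
      Complex.conj_I, map_ofNat, _root_.map_one, map_div₀, Complex.conj_conj]
  · linear_combination -Complex.I * hS i j + hG i j + 2 * hXe i j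
  · linear_combination Complex.I * hP i j + hT j i
  · linear_combination -Complex.I * congrArg (starRingEnd ℂ) (hP i j) + hT2 i j
  · linear_combination -Complex.I * hS j i + (hG j i).symm + 2 * hXc i j
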